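/- Let F, G₁, G₂ be φ-functions. Then ‖f‖_{F,G₁} = ‖f‖_{F,G₂} for all measurable f if and only if ‖f‖_{1,G₁} = ‖f‖_{1,G₂} for all measurable f (where the subscript 1 denotes the identity φ-function). -/

import Mathlib

open MeasureTheory Set

/-- A φ-function: continuous, strictly increasing on `[0,∞)`, `F(0)=0`, `F(1)=1`,
`F(t) → ∞`. -/
structure IsPhiFun (F : ℝ → ℝ) : Prop where
  cont : ContinuousOn F (Ici 0)
  strictMono : StrictMonoOn F (Ici 0)
  zero : F 0 = 0
  one : F 1 = 1
  tendsto : Filter.Tendsto F Filter.atTop Filter.atTop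

/-- `F̃(t) = 1/F(1/t)` for `t > 0`, and `F̃(0) = 0`. -/
noncomputable def phiTilde (F : ℝ → ℝ) (t : ℝ) : ℝ :=
  if 0 < t then (F t⁻¹)⁻¹ else 0

/-- The non-increasing rearrangement of `f` (measured on `[0,1]`). -/
noncomputable def decRearr (f : ℝ → ℝ) (x : ℝ) : ℝ :=
  sSup {t : ℝ | x ≤ (volume {y ∈ Icc (0:ℝ) 1 | t ≤ |f y|}).toReal}

/-- The Luxemburg norm on `[0,1]` associated with `G`. -/
noncomputable def luxNorm (G : ℝ → ℝ) (g : ℝ → ℝ) : ℝ :=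
  sInf {c : ℝ | 0 < c ∧ ∫ x in Icc (0:ℝ) 1, G (|g x| / c) ≤ 1}

/-- The Orlicz–Lorentz functional `‖f‖_{F,G} = ‖ f* ∘ F̃ ∘ G̃⁻¹ ‖_G`. -/
noncomputable def olNorm (F G : ℝ → ℝ) (f : ℝ → ℝ) : ℝ :=
  luxNorm G (fun x => decRearr f (phiTilde F (Function.invFun (phiTilde G) x)))

namespace S5

def lvl (f : ℝ → ℝ) (t : ℝ) : Set ℝ := {y ∈ Icc (0:ℝ) 1 | t ≤ |f y|}

noncomputable def mfun (f : ℝ → ℝ) (t : ℝ) : ℝ := (volume (lvl f t)).toReal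

def SS (f : ℝ → ℝ) (x : ℝ) : Set ℝ := {t : ℝ | x ≤ mfun f t}

lemma decRearr_eq (f : ℝ → ℝ) (x : ℝ) : decRearr f x = sSup (SS f x) := rfl

lemma vol_lvl_le_one (f : ℝ → ℝ) (t : ℝ) : volume (lvl f t) ≤ 1 := by
  calc volume (lvl f t) ≤ volume (Icc (0:ℝ) 1) := measure_mono (sep_subset _ _)
  _ = 1 := by simp [Real.volume_Icc]

lemma vol_lvl_lt_top (f : ℝ → ℝ) (t : ℝ) : volume (lvl f t) < ⊤ :=
  lt_of_le_of_lt (vol_lvl_le_one f t) (by norm_num)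

lemma mfun_nonneg (f : ℝ → ℝ) (t : ℝ) : 0 ≤ mfun f t := ENNReal.toReal_nonneg

lemma mfun_le_one (f : ℝ → ℝ) (t : ℝ) : mfun f t ≤ 1 := by
  have := vol_lvl_le_one f t
  have h := ENNReal.toReal_mono (by norm_num) this
  simpa [mfun] using h

lemma mfun_antitone (f : ℝ → ℝ) : Antitone (mfun f) := by
  intro t t' htt'
  apply ENNReal.toReal_mono (vol_lvl_lt_top f t).ne
  apply measure_mono
  intro y hy
  exact ⟨hy.1, le_trans htt' hy.2⟩

lemma zero_mem_SS (f : ℝ → ℝ) {x : ℝ} (hx : x ≤ 1) : 0 ∈ SS f x := by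
  have : lvl f 0 = Icc (0:ℝ) 1 := by
    ext y; simp [lvl, abs_nonneg]
  simp only [SS, mfun, mem_setOf_eq, this, Real.volume_Icc]
  rw [show ((1:ℝ) - 0) = 1 by ring]
  simpa using hx

lemma SS_empty (f : ℝ → ℝ) {x : ℝ} (hx : 1 < x) : SS f x = ∅ := by
  ext t
  simp only [SS, mem_setOf_eq, mem_empty_iff_false, iff_false, not_le]
  exact lt_of_le_of_lt (mfun_le_one f t) hx

lemma decRearr_nonneg (f : ℝ → ℝ) (x : ℝ) : 0 ≤ decRearr f x := by
  rw [decRearr_eq]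
  rcases le_or_gt x 1 with hx | hx
  · by_cases hb : BddAbove (SS f x)
    · exact le_csSup hb (zero_mem_SS f hx)
    · rw [Real.sSup_of_not_bddAbove hb]
  · rw [SS_empty f hx, Real.sSup_empty]

lemma SS_bddAbove {f : ℝ → ℝ} (hf : Measurable f) {x : ℝ} (hx : 0 < x) :
    BddAbove (SS f x) := by
  -- find n with mfun f n < x
  obtain ⟨t₀, ht₀⟩ : ∃ t₀ : ℕ, mfun f t₀ < x := by
    have hmeas : ∀ n : ℕ, NullMeasurableSet (lvl f n) volume := by
      intro n
      exact (measurableSet_Icc.inter (measurableSet_le measurable_const hf.abs)).nullMeasurableSet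
    have hanti : Antitone (fun n : ℕ => lvl f n) := by
      intro a b hab y hy
      exact ⟨hy.1, le_trans (by exact_mod_cast hab) hy.2⟩
    have hempty : (⋂ n : ℕ, lvl f n) = ∅ := by
      ext y
      simp only [mem_iInter, mem_empty_iff_false, iff_false, not_forall]
      obtain ⟨n, hn⟩ := exists_nat_gt (|f y|)
      exact ⟨n, fun hy => absurd hy.2 (not_le.2 hn)⟩
    have := tendsto_measure_iInter_atTop (μ := volume) hmeas hanti ⟨0, (vol_lvl_lt_top f ((0:ℕ):ℝ)).ne⟩
    rw [hempty] at this
    simp only [measure_empty] at this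
    have hx' : (0:ENNReal) < ENNReal.ofReal x := by simpa using hx
    have := this.eventually_lt_const hx'
    obtain ⟨n, hn⟩ := this.exists
    refine ⟨n, ?_⟩
    have : mfun f n < (ENNReal.ofReal x).toReal :=
      ENNReal.toReal_strict_mono (by simp) hn
    simpa [ENNReal.toReal_ofReal hx.le] using this
  refine ⟨t₀, fun t ht => ?_⟩
  by_contra h
  push_neg at h
  have := mfun_antitone f (le_of_lt h)
  have : x ≤ mfun f t₀ := le_trans ht this
  exact absurd this (not_le.2 ht₀)


lemma decRearr_antitone {f : ℝ → ℝ} (hf : Measurable f) :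
    AntitoneOn (decRearr f) (Ioi 0) := by
  intro x hx x' hx' hxx'
  rcases le_or_gt x' 1 with h1 | h1
  · rw [decRearr_eq, decRearr_eq]
    refine csSup_le_csSup (SS_bddAbove hf hx) ⟨0, zero_mem_SS f h1⟩ ?_
    intro t ht
    exact le_trans hxx' ht
  · rw [decRearr_eq f x', SS_empty f h1, Real.sSup_empty]
    exact decRearr_nonneg f x

/-- left-jump set of an antitone function on `Ioc 0 1` is countable -/
lemma jump_countable {g : ℝ → ℝ} (hg : AntitoneOn g (Ioc 0 1)) :
    {x ∈ Ioc (0:ℝ) 1 | ∃ ε > 0, ∀ y ∈ Ioo 0 x, g x + ε ≤ g y}.Countable := by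
  set J := {x ∈ Ioc (0:ℝ) 1 | ∃ ε > 0, ∀ y ∈ Ioo 0 x, g x + ε ≤ g y} with hJ
  have hq : ∀ x ∈ J, ∃ q : ℚ, g x < (q:ℝ) ∧ ∀ y ∈ Ioo 0 x, (q:ℝ) < g y := by
    rintro x ⟨hx, ε, hε, hy⟩
    obtain ⟨q, hq1, hq2⟩ := exists_rat_btwn (show g x < g x + ε by linarith)
    exact ⟨q, hq1, fun y hy' => lt_of_lt_of_le hq2 (hy y hy')⟩
  choose Q hQ1 hQ2 using hq
  -- the map x ↦ Q x is injective on J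
  classical
  let Q' : ℝ → ℚ := fun x => if h : x ∈ J then Q x h else 0
  have hinj : InjOn Q' J := by
    intro x₁ h₁ x₂ h₂ he
    by_contra hne
    wlog hlt : x₁ < x₂ generalizing x₁ x₂
    · exact this h₂ h₁ he.symm (Ne.symm hne) (lt_of_le_of_ne (not_lt.1 hlt) (Ne.symm hne))
    have e1 : Q' x₁ = Q x₁ h₁ := dif_pos h₁
    have e2 : Q' x₂ = Q x₂ h₂ := dif_pos h₂
    have hx1J : x₁ ∈ Ioo 0 x₂ := ⟨h₁.1.1, hlt⟩
    have : (Q x₂ h₂ : ℝ) < g x₁ := hQ2 x₂ h₂ x₁ hx1J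
    have : (Q x₂ h₂ : ℝ) < (Q x₁ h₁ : ℝ) := lt_trans this (hQ1 x₁ h₁)
    rw [← e1, ← e2, he] at this
    exact lt_irrefl _ this
  exact (mapsTo_univ Q' J).countable_of_injOn hinj countable_univ

/-- core lemma: decreasing rearrangement of a nonneg antitone function is itself, off a
countable set -/
lemma decRearr_of_antitone {g : ℝ → ℝ} (hg : Measurable g)
    (hanti : AntitoneOn g (Ioc 0 1)) (hnn : ∀ y ∈ Icc (0:ℝ) 1, 0 ≤ g y) :
    ∃ D : Set ℝ, D.Countable ∧ ∀ x ∈ Ioc (0:ℝ) 1, x ∉ D → decRearr g x = g x := by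
  refine ⟨_, jump_countable hanti, ?_⟩
  intro x hx hxD
  have hx0 : (0:ℝ) < x := hx.1
  have hb : BddAbove (SS g x) := SS_bddAbove hg hx0
  have hne : (SS g x).Nonempty := ⟨0, zero_mem_SS g hx.2⟩
  rw [decRearr_eq]
  apply le_antisymm
  · apply csSup_le hne
    intro t ht
    by_contra hlt
    push_neg at hlt
    -- x not a jump point: ∃ y ∈ Ioo 0 x, g y < g x + (t - g x) = t
    have : ¬ ∃ ε > 0, ∀ y ∈ Ioo 0 x, g x + ε ≤ g y := fun h => hxD ⟨hx, h⟩
    push_neg at this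
    obtain ⟨y, hy, hgy⟩ := this (t - g x) (by linarith)
    have hgyt : g y < t := by linarith
    -- lvl g t ⊆ Ico 0 y
    have hsub : lvl g t ⊆ Ico 0 y := by
      rintro z ⟨hz, hzt⟩
      refine ⟨hz.1, ?_⟩
      by_contra hzy
      push_neg at hzy
      have hzIoc : z ∈ Ioc (0:ℝ) 1 := ⟨lt_of_lt_of_le hy.1 hzy, hz.2⟩
      have : g z ≤ g y := hanti ⟨hy.1, le_trans hzy hz.2⟩ hzIoc hzy
      have : |g z| < t := by
        rw [abs_of_nonneg (hnn z hz)]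
        exact lt_of_le_of_lt this hgyt
      exact absurd hzt (not_le.2 this)
    have : mfun g t ≤ y := by
      have h1 : volume (lvl g t) ≤ ENNReal.ofReal y := by
        refine le_trans (measure_mono hsub) ?_
        rw [Real.volume_Ico]; simp
      calc mfun g t ≤ (ENNReal.ofReal y).toReal :=
            ENNReal.toReal_mono (by simp) h1
        _ = y := ENNReal.toReal_ofReal hy.1.le
    have : x ≤ y := le_trans ht this
    exact absurd this (not_le.2 hy.2)
  · -- g x ≤ sSup (SS g x)
    by_contra h
    push_neg at h
    set s := sSup (SS g x) with hs
    have hmid : s < (s + g x) / 2 ∧ (s + g x)/2 < g x := by constructor <;> linarith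
    set t := (s + g x)/2 with htdef
    have htS : t ∈ SS g x := by
      -- Ioc 0 x ⊆ lvl g t
      have hsub : Ioc 0 x ⊆ lvl g t := by
        rintro z ⟨hz0, hzx⟩
        have hz1 : z ≤ 1 := le_trans hzx hx.2
        refine ⟨⟨hz0.le, hz1⟩, ?_⟩
        rw [abs_of_nonneg (hnn z ⟨hz0.le, hz1⟩)]
        have : g x ≤ g z := hanti ⟨hz0, hz1⟩ hx hzx
        linarith [hmid.2]
      have h1 : ENNReal.ofReal x ≤ volume (lvl g t) := by
        have h2 := measure_mono (μ := volume) hsub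
        rwa [Real.volume_Ioc, sub_zero] at h2
      show x ≤ mfun g t
      calc x = (ENNReal.ofReal x).toReal := (ENNReal.toReal_ofReal hx0.le).symm
        _ ≤ mfun g t := ENNReal.toReal_mono (vol_lvl_lt_top g t).ne h1
    have := le_csSup hb htS
    rw [← hs] at this
    linarith [hmid.1]


lemma measurable_of_antitoneOn {g : ℝ → ℝ} (hconst : ∀ t ≤ (0:ℝ), g t = g 0)
    (hanti : AntitoneOn g (Ioi 0)) : Measurable g := by
  apply measurable_of_Ici
  intro c
  apply Set.OrdConnected.measurableSet
  constructor
  rintro x₁ h₁ x₂ h₂ y ⟨hy1, hy2⟩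
  simp only [mem_preimage, mem_Ici] at *
  rcases le_or_gt y 0 with hy0 | hy0
  · rw [hconst y hy0, ← hconst x₁ (le_trans hy1 hy0)]
    exact h₁
  · have hx2 : (0:ℝ) < x₂ := lt_of_lt_of_le hy0 hy2
    exact le_trans h₂ (hanti hy0 hx2 hy2)

lemma phiTilde_pos {H : ℝ → ℝ} (hH : IsPhiFun H) {t : ℝ} (ht : 0 < t) :
    0 < phiTilde H t := by
  rw [phiTilde, if_pos ht]
  have : 0 < H t⁻¹ := by
    rw [← hH.zero]
    exact hH.strictMono (mem_Ici.2 (le_refl 0)) (le_of_lt (inv_pos.2 ht)) (inv_pos.2 ht)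
  exact inv_pos.2 this

lemma phiTilde_nonpos {H : ℝ → ℝ} {t : ℝ} (ht : ¬ 0 < t) : phiTilde H t = 0 :=
  if_neg ht

lemma phiTilde_strictMonoOn {H : ℝ → ℝ} (hH : IsPhiFun H) :
    StrictMonoOn (phiTilde H) (Ioi 0) := by
  intro t₁ ht₁ t₂ ht₂ hlt
  rw [phiTilde, if_pos (mem_Ioi.1 ht₁), phiTilde, if_pos (mem_Ioi.1 ht₂)]
  have h2 : (0:ℝ) < t₂⁻¹ := inv_pos.2 ht₂
  have h21 : t₂⁻¹ < t₁⁻¹ := by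
    apply inv_strictAnti₀ (mem_Ioi.1 ht₁) hlt
  have hH2 : 0 < H t₂⁻¹ := by
    rw [← hH.zero]; exact hH.strictMono (mem_Ici.2 (le_refl 0)) h2.le h2
  have := hH.strictMono h2.le (le_trans h2.le h21.le) h21
  exact inv_strictAnti₀ hH2 this

lemma phiTilde_one {H : ℝ → ℝ} (hH : IsPhiFun H) : phiTilde H 1 = 1 := by
  rw [phiTilde, if_pos one_pos]
  simp [hH.one]

lemma phiTilde_id {t : ℝ} (ht : 0 < t) : phiTilde (fun s => s) t = t := by
  rw [phiTilde, if_pos ht, inv_inv]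

/-- surjectivity of phiTilde onto positives -/
lemma phiTilde_surj {H : ℝ → ℝ} (hH : IsPhiFun H) {x : ℝ} (hx : 0 < x) :
    ∃ t, 0 < t ∧ phiTilde H t = x := by
  obtain ⟨M, hM⟩ : ∃ M, 0 ≤ M ∧ x⁻¹ ≤ H M := by
    have := (hH.tendsto.eventually_ge_atTop x⁻¹).and (Filter.eventually_ge_atTop 0)
    obtain ⟨M, h1, h2⟩ := this.exists
    exact ⟨M, h2, h1⟩
  have hcont : ContinuousOn H (Icc 0 M) := hH.cont.mono (Icc_subset_Ici_self)
  have hIVT := intermediate_value_Icc hM.1 hcont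
  have hx' : x⁻¹ ∈ Icc (H 0) (H M) := by
    constructor
    · rw [hH.zero]; exact (inv_pos.2 hx).le
    · exact hM.2
  obtain ⟨a, ha, haeq⟩ := hIVT hx'
  have ha0 : 0 < a := by
    rcases lt_or_eq_of_le ha.1 with h | h
    · exact h
    · exfalso
      rw [← h, hH.zero] at haeq
      exact absurd haeq.symm (ne_of_gt (inv_pos.2 hx))
  refine ⟨a⁻¹, inv_pos.2 ha0, ?_⟩
  rw [phiTilde, if_pos (inv_pos.2 ha0), inv_inv, haeq, inv_inv]

/-- facts about the choice inverse of phiTilde -/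
lemma invFun_spec {H : ℝ → ℝ} (hH : IsPhiFun H) {x : ℝ} (hx : 0 < x) :
    0 < Function.invFun (phiTilde H) x ∧ phiTilde H (Function.invFun (phiTilde H) x) = x := by
  obtain ⟨t, ht, hteq⟩ := phiTilde_surj hH hx
  have heq : phiTilde H (Function.invFun (phiTilde H) x) = x :=
    Function.invFun_eq ⟨t, hteq⟩
  refine ⟨?_, heq⟩
  by_contra h
  push_neg at h
  rw [phiTilde_nonpos (not_lt.2 h)] at heq
  exact absurd heq.symm (ne_of_gt hx)

lemma invFun_le_one {H : ℝ → ℝ} (hH : IsPhiFun H) {x : ℝ} (hx : 0 < x) (hx1 : x ≤ 1) :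
    Function.invFun (phiTilde H) x ≤ 1 := by
  obtain ⟨hpos, heq⟩ := invFun_spec hH hx
  by_contra h
  push_neg at h
  have := phiTilde_strictMonoOn hH (mem_Ioi.2 one_pos) (mem_Ioi.2 (lt_trans one_pos h)) h
  rw [heq, phiTilde_one hH] at this
  linarith

lemma invFun_injOn {H : ℝ → ℝ} (hH : IsPhiFun H) :
    InjOn (Function.invFun (phiTilde H)) (Ioc 0 1) := by
  intro x₁ h₁ x₂ h₂ he
  have e₁ := (invFun_spec hH h₁.1).2
  have e₂ := (invFun_spec hH h₂.1).2
  rw [← e₁, ← e₂, he]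

lemma invFun_comp {H : ℝ → ℝ} (hH : IsPhiFun H) {t : ℝ} (ht : 0 < t) :
    Function.invFun (phiTilde H) (phiTilde H t) = t := by
  have hpt : 0 < phiTilde H t := phiTilde_pos hH ht
  obtain ⟨hpos, heq⟩ := invFun_spec hH hpt
  exact (phiTilde_strictMonoOn hH).injOn (mem_Ioi.2 hpos) (mem_Ioi.2 ht) heq

lemma invFun_mono {H : ℝ → ℝ} (hH : IsPhiFun H) {x₁ x₂ : ℝ} (h₁ : 0 < x₁) (hle : x₁ ≤ x₂) :
    Function.invFun (phiTilde H) x₁ ≤ Function.invFun (phiTilde H) x₂ := by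
  rcases eq_or_lt_of_le hle with rfl | hlt
  · exact le_refl _
  have h₂ : 0 < x₂ := lt_trans h₁ hlt
  obtain ⟨p₁, e₁⟩ := invFun_spec hH h₁
  obtain ⟨p₂, e₂⟩ := invFun_spec hH h₂
  by_contra h
  push_neg at h
  have := phiTilde_strictMonoOn hH (mem_Ioi.2 p₂) (mem_Ioi.2 p₁) h
  rw [e₁, e₂] at this
  linarith


lemma phiTilde_le_one {H : ℝ → ℝ} (hH : IsPhiFun H) {t : ℝ} (ht : 0 < t) (ht1 : t ≤ 1) :
    phiTilde H t ≤ 1 := by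
  rcases eq_or_lt_of_le ht1 with rfl | hlt
  · exact (phiTilde_one hH).le
  · rw [← phiTilde_one hH]
    exact (phiTilde_strictMonoOn hH (mem_Ioi.2 ht) (mem_Ioi.2 one_pos) hlt).le

lemma luxNorm_congr (G : ℝ → ℝ) {h₁ h₂ : ℝ → ℝ}
    (h : ∀ᵐ x ∂(volume : Measure ℝ), x ∈ Icc (0:ℝ) 1 → h₁ x = h₂ x) :
    luxNorm G h₁ = luxNorm G h₂ := by
  unfold luxNorm
  congr 1
  ext c
  have heq : ∫ x in Icc (0:ℝ) 1, G (|h₁ x| / c) = ∫ x in Icc (0:ℝ) 1, G (|h₂ x| / c) :=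
    setIntegral_congr_ae measurableSet_Icc (h.mono fun x hx hmem => by rw [hx hmem])
  rw [mem_setOf_eq, mem_setOf_eq, heq]

/-- key driver: two functions agreeing on `(0,1]` off a countable set give equal
Luxemburg norms after composing with the inverse of `phiTilde G`. -/
lemma lux_comp_congr {G : ℝ → ℝ} (hG : IsPhiFun G) {h₁ h₂ : ℝ → ℝ} {D : Set ℝ}
    (hD : D.Countable) (hh : ∀ t ∈ Ioc (0:ℝ) 1, t ∉ D → h₁ t = h₂ t) :
    luxNorm G (fun x => h₁ (Function.invFun (phiTilde G) x)) =
      luxNorm G (fun x => h₂ (Function.invFun (phiTilde G) x)) := by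
  apply luxNorm_congr
  set u := Function.invFun (phiTilde G)
  set N : Set ℝ := {0} ∪ {x ∈ Ioc (0:ℝ) 1 | u x ∈ D} with hN
  have hNc : N.Countable := by
    apply Set.Countable.union (countable_singleton 0)
    apply MapsTo.countable_of_injOn (t := D) (f := u)
    · intro x hx; exact hx.2
    · exact (invFun_injOn hG).mono (sep_subset _ _)
    · exact hD
  have hN0 : volume N = 0 := hNc.measure_zero _
  have hae : ∀ᵐ x ∂(volume : Measure ℝ), x ∉ N := by
    rw [ae_iff]; simpa using hN0
  refine hae.mono fun x hx hmem => ?_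
  have hx0 : 0 < x := by
    rcases eq_or_lt_of_le hmem.1 with h | h
    · exact absurd (mem_union_left _ (by simp [← h])) hx
    · exact h
  have hxIoc : x ∈ Ioc (0:ℝ) 1 := ⟨hx0, hmem.2⟩
  have huD : u x ∉ D := fun h => hx (mem_union_right _ ⟨hxIoc, h⟩)
  have hu0 : 0 < u x := (invFun_spec hG hx0).1
  have hu1 : u x ≤ 1 := invFun_le_one hG hx0 hmem.2
  exact hh (u x) ⟨hu0, hu1⟩ huD

/-- `g` associated to `f` in the forward translation -/
noncomputable def gOf (F f : ℝ → ℝ) : ℝ → ℝ := fun t => decRearr f (phiTilde F t)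

lemma gOf_antitone {F f : ℝ → ℝ} (hF : IsPhiFun F) (hf : Measurable f) :
    AntitoneOn (gOf F f) (Ioi 0) := by
  intro t₁ h₁ t₂ h₂ hle
  unfold gOf
  rcases eq_or_lt_of_le hle with rfl | hlt
  · exact le_refl _
  exact decRearr_antitone hf (mem_Ioi.2 (phiTilde_pos hF h₁))
    (mem_Ioi.2 (phiTilde_pos hF h₂))
    (phiTilde_strictMonoOn hF h₁ h₂ hlt).le

lemma gOf_measurable {F f : ℝ → ℝ} (hF : IsPhiFun F) (hf : Measurable f) :
    Measurable (gOf F f) := by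
  apply measurable_of_antitoneOn
  · intro t ht
    unfold gOf
    rw [phiTilde_nonpos (not_lt.2 ht), phiTilde_nonpos (lt_irrefl 0)]
  · exact gOf_antitone hF hf

/-- bridge for the `⇐` direction -/
lemma bridge1 {F G f : ℝ → ℝ} (hF : IsPhiFun F) (hG : IsPhiFun G) (hf : Measurable f) :
    olNorm F G f = olNorm (fun t => t) G (gOf F f) := by
  unfold olNorm
  obtain ⟨D, hDc, hD⟩ := decRearr_of_antitone (gOf_measurable hF hf)
    ((gOf_antitone hF hf).mono Ioc_subset_Ioi_self)
    (fun y _ => decRearr_nonneg f _)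
  exact lux_comp_congr hG hDc (h₁ := fun t => decRearr f (phiTilde F t))
    (h₂ := fun t => decRearr (gOf F f) (phiTilde (fun s => s) t))
    (fun t ht htD => by
      show decRearr f (phiTilde F t) = decRearr (gOf F f) (phiTilde (fun s => s) t)
      rw [phiTilde_id ht.1, hD t ht htD]
      rfl)

/-- `f` associated to `g` in the backward translation -/
noncomputable def fOf (F g : ℝ → ℝ) : ℝ → ℝ := fun x =>
  if 0 < x then decRearr g (Function.invFun (phiTilde F) x) else 0

lemma fOf_antitone {F g : ℝ → ℝ} (hF : IsPhiFun F) (hg : Measurable g) :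
    AntitoneOn (fOf F g) (Ioi 0) := by
  intro x₁ h₁ x₂ h₂ hle
  unfold fOf
  rw [if_pos (mem_Ioi.1 h₁), if_pos (mem_Ioi.1 h₂)]
  exact decRearr_antitone hg (mem_Ioi.2 (invFun_spec hF (mem_Ioi.1 h₁)).1)
    (mem_Ioi.2 (invFun_spec hF (mem_Ioi.1 h₂)).1)
    (invFun_mono hF (mem_Ioi.1 h₁) hle)

lemma fOf_measurable {F g : ℝ → ℝ} (hF : IsPhiFun F) (hg : Measurable g) :
    Measurable (fOf F g) := by
  apply measurable_of_antitoneOn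
  · intro t ht
    unfold fOf
    rw [if_neg (not_lt.2 ht), if_neg (lt_irrefl 0)]
  · exact fOf_antitone hF hg

/-- bridge for the `⇒` direction -/
lemma bridge2 {F G g : ℝ → ℝ} (hF : IsPhiFun F) (hG : IsPhiFun G) (hg : Measurable g) :
    olNorm (fun t => t) G g = olNorm F G (fOf F g) := by
  unfold olNorm
  obtain ⟨D', hD'c, hD'⟩ := decRearr_of_antitone (fOf_measurable hF hg)
    ((fOf_antitone hF hg).mono Ioc_subset_Ioi_self)
    (fun y _ => by
      unfold fOf
      split
      · exact decRearr_nonneg g _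
      · exact le_refl 0)
  set D : Set ℝ := {t ∈ Ioc (0:ℝ) 1 | phiTilde F t ∈ D'} with hDdef
  have hDc : D.Countable := by
    apply MapsTo.countable_of_injOn (t := D') (f := phiTilde F)
    · intro t ht; exact ht.2
    · exact ((phiTilde_strictMonoOn hF).injOn).mono
        (fun t ht => Ioc_subset_Ioi_self ht.1)
    · exact hD'c
  apply lux_comp_congr hG hDc (h₁ := fun t => decRearr g (phiTilde (fun s => s) t))
    (h₂ := fun t => decRearr (fOf F g) (phiTilde F t))
  intro t ht htD
  have hs0 : 0 < phiTilde F t := phiTilde_pos hF ht.1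
  have hs1 : phiTilde F t ≤ 1 := phiTilde_le_one hF ht.1 ht.2
  have hsD' : phiTilde F t ∉ D' := fun h => htD ⟨ht, h⟩
  show decRearr g (phiTilde (fun s => s) t) = decRearr (fOf F g) (phiTilde F t)
  rw [phiTilde_id ht.1, hD' (phiTilde F t) ⟨hs0, hs1⟩ hsD']
  unfold fOf
  rw [if_pos hs0, invFun_comp hF ht.1]


end S5

/-- for φ-functions `F, G₁, G₂`: `‖f‖_{F,G₁} = ‖f‖_{F,G₂}` for all
measurable `f` iff `‖f‖_{1,G₁} = ‖f‖_{1,G₂}` for all measurable `f`, where `1`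
denotes the identity φ-function. -/
theorem stmt_5 (F G₁ G₂ : ℝ → ℝ) (hF : IsPhiFun F) (hG₁ : IsPhiFun G₁) (hG₂ : IsPhiFun G₂) :
    (∀ f : ℝ → ℝ, Measurable f → olNorm F G₁ f = olNorm F G₂ f) ↔
    (∀ f : ℝ → ℝ, Measurable f → olNorm (fun t => t) G₁ f = olNorm (fun t => t) G₂ f) := by
  constructor
  · intro H g hg
    rw [S5.bridge2 hF hG₁ hg, S5.bridge2 hF hG₂ hg]
    exact H (S5.fOf F g) (S5.fOf_measurable hF hg)
  · intro H f hf
    rw [S5.bridge1 hF hG₁ hf, S5.bridge1 hF hG₂ hf]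
    exact H (S5.gOf F f) (S5.gOf_measurable hF hf)
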